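/- arXiv:1801.03348 — 4 statements merged into one kernel-verified Lean document; each statement's English description precedes it below -/
import Mathlib

section
/- Let ω be a disk with boundary circle Γ, and let A, B, C be points on Γ such that the arc AC is a sub-arc of the arc AB (traversed in the same direction from A). Let ω₁ be the disk centered at the midpoint of arc AB passing through A and B, and ω₂ the disk centered at the midpoint of arc AC passing through A and C. Then ω ∩ ω₂ ⊆ ω ∩ ω₁, and every point of ω ∩ ω₂ other than A lies in the interior of ω₁. -/
open EuclideanGeometry Metric Real

/-- The point at angle `θ` on the circle centered at `O` with radius `r`
in the Euclidean plane. -/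
noncomputable def circlePt (O : EuclideanSpace ℝ (Fin 2)) (r θ : ℝ) :
    EuclideanSpace ℝ (Fin 2) :=
  O + r • (WithLp.equiv 2 (Fin 2 → ℝ)).symm ![Real.cos θ, Real.sin θ]

/-- The side disk of the arc from angle `a` to angle `b` (traversed in increasing angle)
of the circle centered at `O` with radius `r`: the closed disk centered at the midpoint
of the arc whose boundary passes through the two endpoints of the arc. -/
noncomputable def sideDisk (O : EuclideanSpace ℝ (Fin 2)) (r a b : ℝ) :
    Set (EuclideanSpace ℝ (Fin 2)) :=
  Metric.closedBall (circlePt O r ((a + b) / 2))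
    (dist (circlePt O r ((a + b) / 2)) (circlePt O r a))

/-- The boundary circle of the side disk of the arc from angle `a` to angle `b`. -/
noncomputable def sideCircle (O : EuclideanSpace ℝ (Fin 2)) (r a b : ℝ) :
    Set (EuclideanSpace ℝ (Fin 2)) :=
  Metric.sphere (circlePt O r ((a + b) / 2))
    (dist (circlePt O r ((a + b) / 2)) (circlePt O r a))

section Aux

lemma trig_key (γ α φ : ℝ) (hγ : 0 < γ) (hγα : γ < α) (hαπ : α < π)
    (hφ : (π/2 < φ ∧ φ ≤ π) ∨ (-π ≤ φ ∧ φ < -π/2))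
    (hyp : Real.cos φ < Real.cos (γ - φ)) :
    0 < Real.cos (α - φ) ∨ Real.cos (γ - φ) < Real.cos (α - φ) := by
  have hπ := Real.pi_pos
  rcases hφ with ⟨h1, h2⟩ | ⟨h1, h2⟩
  · by_cases hw : α - φ ≤ 0
    · right
      have h := Real.cos_lt_cos_of_nonneg_of_le_pi (x := φ - α) (y := φ - γ)
        (by linarith) (by linarith) (by linarith)
      rw [show γ - φ = -(φ - γ) by ring, show α - φ = -(φ - α) by ring,
        Real.cos_neg, Real.cos_neg]
      exact h
    · left
      apply Real.cos_pos_of_mem_Ioo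
      push_neg at hw
      constructor <;> linarith
  · by_cases hB : γ - π < φ
    · exfalso
      have h := Real.cos_lt_cos_of_nonneg_of_le_pi (x := -φ) (y := γ - φ)
        (by linarith) (by linarith) (by linarith)
      rw [Real.cos_neg] at h
      linarith
    · right
      push_neg at hB
      have h := Real.cos_lt_cos_of_nonneg_of_le_pi (x := -(α - φ - 2*π)) (y := -(γ - φ - 2*π))
        (by linarith) (by linarith) (by linarith)
      rw [Real.cos_neg, Real.cos_neg] at h
      rw [show γ - φ = (γ - φ - 2*π) + 2*π by ring, show α - φ = (α - φ - 2*π) + 2*π by ring,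
        Real.cos_add_two_pi, Real.cos_add_two_pi]
      exact h

lemma core_key (r γ α x y : ℝ) (hr : 0 < r) (hγ : 0 < γ) (hγα : γ < α) (hαπ : α < π)
    (ht : 0 < x^2 + y^2)
    (h0 : x^2 + y^2 + 2*r*x ≤ 0)
    (h2 : x^2 + y^2 + 2*r*x ≤ 2*r*(x * Real.cos γ + y * Real.sin γ)) :
    x^2 + y^2 + 2*r*x < 2*r*(x * Real.cos α + y * Real.sin α) := by
  have hπ := Real.pi_pos
  obtain ⟨t, ht', ht2⟩ : ∃ t : ℝ, 0 < t ∧ t^2 = x^2 + y^2 :=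
    ⟨Real.sqrt (x^2+y^2), Real.sqrt_pos.mpr ht, Real.sq_sqrt ht.le⟩
  obtain ⟨c, s, hx, hy⟩ : ∃ c s : ℝ, x = t * c ∧ y = t * s :=
    ⟨x/t, y/t, by field_simp, by field_simp⟩
  have ht2' : t^2 = (t*c)^2 + (t*s)^2 := by rw [hx, hy] at ht2; exact ht2
  have hcs : c^2 + s^2 = 1 := by
    have hne : t^2 ≠ 0 := pow_ne_zero 2 ht'.ne'
    have : t^2 * (c^2 + s^2) = t^2 * 1 := by linear_combination (-1 : ℝ) * ht2'
    exact mul_left_cancel₀ hne this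
  have hxneg : x < 0 := by nlinarith
  have hc : c < 0 := by nlinarith
  have hc1 : -1 ≤ c := by nlinarith
  have hc1' : c ≤ 1 := by nlinarith
  obtain ⟨φ, hcosφ, hsinφ, hφr⟩ : ∃ φ : ℝ, Real.cos φ = c ∧ Real.sin φ = s ∧
      ((π/2 < φ ∧ φ ≤ π) ∨ (-π ≤ φ ∧ φ < -π/2)) := by
    have harc1 : π/2 < Real.arccos c := by
      by_contra hcon
      push_neg at hcon
      have := Real.cos_nonneg_of_mem_Icc (x := Real.arccos c)
        ⟨by linarith [Real.arccos_nonneg c], hcon⟩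
      rw [Real.cos_arccos hc1 hc1'] at this
      linarith
    have harc2 := Real.arccos_le_pi c
    have hsq : 1 - c^2 = s^2 := by linarith
    by_cases hs : 0 ≤ s
    · exact ⟨Real.arccos c, Real.cos_arccos hc1 hc1',
        by rw [Real.sin_arccos, hsq, Real.sqrt_sq hs], Or.inl ⟨harc1, harc2⟩⟩
    · push_neg at hs
      refine ⟨-Real.arccos c, by rw [Real.cos_neg]; exact Real.cos_arccos hc1 hc1', ?_,
        Or.inr ⟨by linarith, by linarith⟩⟩
      rw [Real.sin_neg, Real.sin_arccos, hsq, Real.sqrt_sq_eq_abs, abs_of_neg hs, neg_neg]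
  have hyp : Real.cos φ < Real.cos (γ - φ) := by
    rw [Real.cos_sub, hcosφ, hsinφ]
    have h2' : t*t*(c^2+s^2) + 2*r*(t*c) ≤ 2*r*(t*c*Real.cos γ + t*s*Real.sin γ) := by
      rw [hx, hy] at h2; nlinarith [h2]
    rw [hcs] at h2'
    nlinarith [mul_pos hr ht']
  rcases trig_key γ α φ hγ hγα hαπ hφr hyp with h | h
  · rw [Real.cos_sub, hcosφ, hsinφ] at h
    have key : 0 < x * Real.cos α + y * Real.sin α := by
      have h5 : 0 < t * (Real.cos α * c + Real.sin α * s) := mul_pos ht' h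
      rw [hx, hy]
      ring_nf at h5 ⊢
      linarith
    have h6 : 0 < 2*r*(x * Real.cos α + y * Real.sin α) :=
      mul_pos (by linarith) key
    linarith
  · rw [Real.cos_sub, Real.cos_sub, hcosφ, hsinφ] at h
    have key : x * Real.cos γ + y * Real.sin γ < x * Real.cos α + y * Real.sin α := by
      have h5 := mul_lt_mul_of_pos_left h ht'
      rw [hx, hy]
      ring_nf at h5 ⊢
      linarith
    have h6 := mul_lt_mul_of_pos_left key (show (0:ℝ) < 2*r by linarith)
    linarith

lemma circlePt_apply0 (O : EuclideanSpace ℝ (Fin 2)) (r θ : ℝ) :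
    circlePt O r θ 0 = O 0 + r * Real.cos θ := by simp [circlePt]

lemma circlePt_apply1 (O : EuclideanSpace ℝ (Fin 2)) (r θ : ℝ) :
    circlePt O r θ 1 = O 1 + r * Real.sin θ := by simp [circlePt]

lemma dist_sq_two (P Q : EuclideanSpace ℝ (Fin 2)) :
    dist P Q ^ 2 = (P 0 - Q 0)^2 + (P 1 - Q 1)^2 := by
  rw [EuclideanSpace.dist_eq, Real.sq_sqrt (by positivity)]
  simp [Fin.sum_univ_two, Real.dist_eq, sq_abs]

end Aux

set_option maxHeartbeats 1000000 in
/-- Lemma 1: if arc `AC` is a sub-arc of arc `AB`, then `ω ∩ ω₂ ⊆ ω ∩ ω₁`, and every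
point of `ω ∩ ω₂` other than `A` lies in the interior of `ω₁`. -/
theorem stmt_0 (O : EuclideanSpace ℝ (Fin 2)) (r a b c : ℝ) (hr : 0 < r)
    (hac : a < c) (hcb : c < b) (hb : b < a + 2 * π) :
    Metric.closedBall O r ∩ sideDisk O r a c ⊆ Metric.closedBall O r ∩ sideDisk O r a b ∧
    ∀ P ∈ Metric.closedBall O r ∩ sideDisk O r a c, P ≠ circlePt O r a →
      P ∈ interior (sideDisk O r a b) := by
  have hπ := Real.pi_pos
  have hpq := Real.sin_sq_add_cos_sq a
  have hγ : 0 < (c-a)/2 := by linarith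
  have hγα : (c-a)/2 < (b-a)/2 := by linarith
  have hαπ : (b-a)/2 < π := by linarith
  -- expansions of the midpoint angles
  have ecb : Real.cos ((a+b)/2) =
      Real.cos a * Real.cos ((b-a)/2) - Real.sin a * Real.sin ((b-a)/2) := by
    rw [show (a+b)/2 = a + (b-a)/2 by ring, Real.cos_add]
  have esb : Real.sin ((a+b)/2) =
      Real.sin a * Real.cos ((b-a)/2) + Real.cos a * Real.sin ((b-a)/2) := by
    rw [show (a+b)/2 = a + (b-a)/2 by ring, Real.sin_add]
  have ecc : Real.cos ((a+c)/2) =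
      Real.cos a * Real.cos ((c-a)/2) - Real.sin a * Real.sin ((c-a)/2) := by
    rw [show (a+c)/2 = a + (c-a)/2 by ring, Real.cos_add]
  have esc : Real.sin ((a+c)/2) =
      Real.sin a * Real.cos ((c-a)/2) + Real.cos a * Real.sin ((c-a)/2) := by
    rw [show (a+c)/2 = a + (c-a)/2 by ring, Real.sin_add]
  -- the radius of ω₁ is positive
  have hcos1 : Real.cos ((b-a)/2) < 1 := by
    have := Real.cos_lt_cos_of_nonneg_of_le_pi (x := 0) (y := (b-a)/2)
      le_rfl hαπ.le (by linarith)
    rwa [Real.cos_zero] at this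
  have hradsq : dist (circlePt O r ((a+b)/2)) (circlePt O r a) ^ 2
      = 2 * r^2 * (1 - Real.cos ((b-a)/2)) := by
    rw [dist_sq_two, circlePt_apply0, circlePt_apply0, circlePt_apply1, circlePt_apply1,
      ecb, esb]
    have hCS := Real.sin_sq_add_cos_sq ((b-a)/2)
    linear_combination (r^2*((Real.cos ((b-a)/2) - 1)^2 + Real.sin ((b-a)/2)^2)) * hpq
      + r^2 * hCS
  have hradsq_pos : 0 < dist (circlePt O r ((a+b)/2)) (circlePt O r a) ^ 2 := by
    rw [hradsq]
    exact mul_pos (by positivity) (by linarith)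
  have hrad_ne : dist (circlePt O r ((a+b)/2)) (circlePt O r a) ≠ 0 := by
    intro h; rw [h] at hradsq_pos; norm_num at hradsq_pos
  have hrad_pos : 0 < dist (circlePt O r ((a+b)/2)) (circlePt O r a) :=
    lt_of_le_of_ne dist_nonneg (Ne.symm hrad_ne)
  -- the key strict inequality
  have key : ∀ P ∈ Metric.closedBall O r ∩ sideDisk O r a c, P ≠ circlePt O r a →
      dist P (circlePt O r ((a+b)/2)) < dist (circlePt O r ((a+b)/2)) (circlePt O r a) := by
    rintro P ⟨hω, hω₂⟩ hne
    rw [Metric.mem_closedBall] at hω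
    rw [sideDisk, Metric.mem_closedBall] at hω₂
    -- squared versions
    have hω' : (P 0 - O 0)^2 + (P 1 - O 1)^2 ≤ r^2 := by
      have := pow_le_pow_left₀ dist_nonneg hω 2
      rwa [dist_sq_two] at this
    have hω₂' : (P 0 - O 0 - r * Real.cos ((a+c)/2))^2
        + (P 1 - O 1 - r * Real.sin ((a+c)/2))^2
        ≤ (r * Real.cos ((a+c)/2) - r * Real.cos a)^2
          + (r * Real.sin ((a+c)/2) - r * Real.sin a)^2 := by
      have h := pow_le_pow_left₀ dist_nonneg hω₂ 2
      have e1 : dist P (circlePt O r ((a+c)/2)) ^ 2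
          = (P 0 - O 0 - r * Real.cos ((a+c)/2))^2
            + (P 1 - O 1 - r * Real.sin ((a+c)/2))^2 := by
        rw [dist_sq_two, circlePt_apply0, circlePt_apply1]; ring
      have e2 : dist (circlePt O r ((a+c)/2)) (circlePt O r a) ^ 2
          = (r * Real.cos ((a+c)/2) - r * Real.cos a)^2
            + (r * Real.sin ((a+c)/2) - r * Real.sin a)^2 := by
        rw [dist_sq_two, circlePt_apply0, circlePt_apply1, circlePt_apply0,
          circlePt_apply1]; ring
      rw [e1, e2] at h
      exact h
    -- abbreviations (expanded throughout)
    -- x := (P 0 - O 0)*cos a + (P 1 - O 1)*sin a - r ;  y := -(P 0 - O 0)*sin a + (P 1 - O 1)*cos a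
    have id1 : ((P 0 - O 0)*Real.cos a + (P 1 - O 1)*Real.sin a - r)^2
        + (-(P 0 - O 0)*Real.sin a + (P 1 - O 1)*Real.cos a)^2
        + 2*r*((P 0 - O 0)*Real.cos a + (P 1 - O 1)*Real.sin a - r)
        = (P 0 - O 0)^2 + (P 1 - O 1)^2 - r^2 := by
      linear_combination ((P 0 - O 0)^2 + (P 1 - O 1)^2) * hpq
    have id2 : ∀ C S : ℝ,
        ((P 0 - O 0 - r*(Real.cos a*C - Real.sin a*S))^2
          + (P 1 - O 1 - r*(Real.sin a*C + Real.cos a*S))^2)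
        - ((r*(Real.cos a*C - Real.sin a*S) - r*Real.cos a)^2
          + (r*(Real.sin a*C + Real.cos a*S) - r*Real.sin a)^2)
        = (((P 0 - O 0)*Real.cos a + (P 1 - O 1)*Real.sin a - r)^2
          + (-(P 0 - O 0)*Real.sin a + (P 1 - O 1)*Real.cos a)^2
          + 2*r*((P 0 - O 0)*Real.cos a + (P 1 - O 1)*Real.sin a - r))
        - 2*r*(((P 0 - O 0)*Real.cos a + (P 1 - O 1)*Real.sin a - r)*C
          + (-(P 0 - O 0)*Real.sin a + (P 1 - O 1)*Real.cos a)*S) := by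
      intro C S
      linear_combination (r^2*(2*C-1) - (P 0 - O 0)^2 - (P 1 - O 1)^2) * hpq
    -- hypothesis of core_key
    have ht : 0 < ((P 0 - O 0)*Real.cos a + (P 1 - O 1)*Real.sin a - r)^2
        + (-(P 0 - O 0)*Real.sin a + (P 1 - O 1)*Real.cos a)^2 := by
      rcases lt_or_ge 0 (((P 0 - O 0)*Real.cos a + (P 1 - O 1)*Real.sin a - r)^2
        + (-(P 0 - O 0)*Real.sin a + (P 1 - O 1)*Real.cos a)^2) with h | h
      · exact h
      · exfalso
        have hx0 : (P 0 - O 0)*Real.cos a + (P 1 - O 1)*Real.sin a - r = 0 := by nlinarith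
        have hy0 : -(P 0 - O 0)*Real.sin a + (P 1 - O 1)*Real.cos a = 0 := by nlinarith
        apply hne
        ext i
        fin_cases i
        · show P 0 = circlePt O r a 0
          rw [circlePt_apply0]
          linear_combination Real.cos a * hx0 - Real.sin a * hy0 - (P 0 - O 0) * hpq
        · show P 1 = circlePt O r a 1
          rw [circlePt_apply1]
          linear_combination Real.sin a * hx0 + Real.cos a * hy0 - (P 1 - O 1) * hpq
    have h0 : (((P 0 - O 0)*Real.cos a + (P 1 - O 1)*Real.sin a - r)^2
        + (-(P 0 - O 0)*Real.sin a + (P 1 - O 1)*Real.cos a)^2)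
        + 2*r*((P 0 - O 0)*Real.cos a + (P 1 - O 1)*Real.sin a - r) ≤ 0 := by
      linarith [id1, hω']
    have h2 : (((P 0 - O 0)*Real.cos a + (P 1 - O 1)*Real.sin a - r)^2
        + (-(P 0 - O 0)*Real.sin a + (P 1 - O 1)*Real.cos a)^2)
        + 2*r*((P 0 - O 0)*Real.cos a + (P 1 - O 1)*Real.sin a - r)
        ≤ 2*r*(((P 0 - O 0)*Real.cos a + (P 1 - O 1)*Real.sin a - r)*Real.cos ((c-a)/2)
          + (-(P 0 - O 0)*Real.sin a + (P 1 - O 1)*Real.cos a)*Real.sin ((c-a)/2)) := by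
      have hid := id2 (Real.cos ((c-a)/2)) (Real.sin ((c-a)/2))
      rw [ecc, esc] at hω₂'
      linarith [hω₂', hid]
    have hcore := core_key r ((c-a)/2) ((b-a)/2)
      ((P 0 - O 0)*Real.cos a + (P 1 - O 1)*Real.sin a - r)
      (-(P 0 - O 0)*Real.sin a + (P 1 - O 1)*Real.cos a)
      hr hγ hγα hαπ ht (by linarith [h0]) (by linarith [h2])
    -- translate back
    have hid := id2 (Real.cos ((b-a)/2)) (Real.sin ((b-a)/2))
    have egoal : dist P (circlePt O r ((a+b)/2)) ^ 2
        = (P 0 - O 0 - r*(Real.cos a*Real.cos ((b-a)/2) - Real.sin a*Real.sin ((b-a)/2)))^2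
          + (P 1 - O 1 - r*(Real.sin a*Real.cos ((b-a)/2) + Real.cos a*Real.sin ((b-a)/2)))^2 := by
      rw [dist_sq_two, circlePt_apply0, circlePt_apply1, ecb, esb]; ring
    have erad : dist (circlePt O r ((a+b)/2)) (circlePt O r a) ^ 2
        = (r*(Real.cos a*Real.cos ((b-a)/2) - Real.sin a*Real.sin ((b-a)/2)) - r*Real.cos a)^2
          + (r*(Real.sin a*Real.cos ((b-a)/2) + Real.cos a*Real.sin ((b-a)/2)) - r*Real.sin a)^2 := by
      rw [dist_sq_two, circlePt_apply0, circlePt_apply1, circlePt_apply0, circlePt_apply1,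
        ecb, esb]; ring
    have hsq : dist P (circlePt O r ((a+b)/2)) ^ 2
        < dist (circlePt O r ((a+b)/2)) (circlePt O r a) ^ 2 := by
      rw [egoal, erad]
      linarith [hcore, hid]
    exact (pow_lt_pow_iff_left₀ dist_nonneg dist_nonneg (by norm_num)).mp hsq
  constructor
  · rintro P ⟨hω, hω₂⟩
    refine ⟨hω, ?_⟩
    by_cases hPA : P = circlePt O r a
    · rw [sideDisk, Metric.mem_closedBall, hPA, dist_comm]
    · rw [sideDisk, Metric.mem_closedBall]
      exact (key P ⟨hω, hω₂⟩ hPA).le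
  · intro P hP hne
    rw [sideDisk, interior_closedBall _ hrad_ne, Metric.mem_ball]
    exact key P hP hne
end

section
/- Let Γ be a circle and A, D points on Γ. Let W be the midpoint of the arc AD (one of the two arcs), F another point on Γ on the arc DA not containing W (specifically, the midpoint of some arc DC). Let ω_F and ω_W be the circles centered at F and W respectively both passing through D, and let X be their second intersection point (other than D). Then F, X, and A are collinear. -/
open EuclideanGeometry Metric Real

private theorem key_trig (r α δ γ : ℝ) :
    ((r * Real.cos (2*α)) - (r * Real.cos (δ + γ)))*(2*(((r * Real.sin (α + δ)) - (r * Real.sin (δ + γ)))*((r * Real.cos (2*δ)) - (r * Real.cos (δ + γ))) - ((r * Real.cos (α + δ)) - (r * Real.cos (δ + γ)))*((r * Real.sin (2*δ)) - (r * Real.sin (δ + γ))))*((r * Real.cos (α + δ)) - (r * Real.cos (δ + γ))) + (((r * Real.cos (α + δ)) - (r * Real.cos (δ + γ)))^2 + ((r * Real.sin (α + δ)) - (r * Real.sin (δ + γ)))^2)*((r * Real.sin (2*δ)) - (r * Real.sin (δ + γ)))) - ((r * Real.sin (2*α)) - (r * Real.sin (δ + γ)))*((((r * Real.cos (α + δ))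 - (r * Real.cos (δ + γ)))^2 + ((r * Real.sin (α + δ)) - (r * Real.sin (δ + γ)))^2)*((r * Real.cos (2*δ)) - (r * Real.cos (δ + γ))) - 2*(((r * Real.sin (α + δ)) - (r * Real.sin (δ + γ)))*((r * Real.cos (2*δ)) - (r * Real.cos (δ + γ))) - ((r * Real.cos (α + δ)) - (r * Real.cos (δ + γ)))*((r * Real.sin (2*δ)) - (r * Real.sin (δ + γ))))*((r * Real.sin (α + δ)) - (r * Real.sin (δ + γ)))) = 0 := by
  simp only [Real.cos_two_mul', Real.sin_two_mul, Real.cos_add, Real.sin_add]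
  linear_combination (r^4 * (1*(Real.cos δ)^3*(Real.sin γ) + 1*(Real.cos δ)^3*(Real.sin γ)*(Real.cos γ)^2 + 1*(Real.cos δ)^3*(Real.sin γ)^3 + -1*(Real.cos δ)^5*(Real.sin γ) + -1*(Real.sin δ)*(Real.cos δ)^2*(Real.cos γ) + 1*(Real.sin δ)*(Real.cos δ)^2*(Real.cos γ)^3 + 1*(Real.sin δ)*(Real.cos δ)^2*(Real.sin γ)^2*(Real.cos γ) + -1*(Real.sin δ)*(Real.cos δ)^4*(Real.cos γ) + 1*(Real.sin δ)^2*(Real.cos δ)*(Real.sin γ) + 1*(Real.sin δ)^2*(Real.cos δ)*(Real.sin γ)*(Real.cos γ)^2 + 1*(Real.sin δ)^2*(Real.cos δ)*(Real.sin γ)^3 + -2*(Real.sin δ)^2*(Real.cos δ)^3*(Real.sin γ) + -1*(Real.sin δ)^3*(Real.cos γ) + 1*(Real.sin δ)^3*(Real.cos γ)^3 + 1*(Real.sin δ)^3*(Real.sin γ)^2*(Real.cos γ) + -2*(Real.sin δ)^3*(Real.cos δ)^2*(Real.cos γ) + -1*(Real.sin δ)^4*(Real.cos δ)*(Real.sin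 γ) + -1*(Real.sin δ)^5*(Real.cos γ) + -2*(Real.cos α)*(Real.cos δ)^4*(Real.sin γ) + 2*(Real.cos α)*(Real.sin δ)*(Real.cos δ)^2*(Real.cos γ)^2 + 2*(Real.cos α)*(Real.sin δ)*(Real.cos δ)^2*(Real.sin γ)^2 + -4*(Real.cos α)*(Real.sin δ)^2*(Real.cos δ)^2*(Real.sin γ) + 2*(Real.cos α)*(Real.sin δ)^3*(Real.cos γ)^2 + 2*(Real.cos α)*(Real.sin δ)^3*(Real.sin γ)^2 + -2*(Real.cos α)*(Real.sin δ)^4*(Real.sin γ) + 1*(Real.cos α)^2*(Real.cos δ)^3*(Real.sin γ) + -1*(Real.cos α)^2*(Real.sin δ)*(Real.cos δ)^2*(Real.cos γ) + 1*(Real.cos α)^2*(Real.sin δ)^2*(Real.cos δ)*(Real.sin γ) + -1*(Real.cos α)^2*(Real.sin δ)^3*(Real.cos γ) + -2*(Real.sin α)*(Real.cos δ)^3*(Real.cos γ)^2 + -2*(Real.sin α)*(Real.cos δ)^3*(Real.sin γ)^2 + 2*(Real.sin α)*(Real.cos δ)^4*(Real.cos γ) + -2*(Real.sin α)*(Real.sin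 δ)^2*(Real.cos δ)*(Real.cos γ)^2 + -2*(Real.sin α)*(Real.sin δ)^2*(Real.cos δ)*(Real.sin γ)^2 + 4*(Real.sin α)*(Real.sin δ)^2*(Real.cos δ)^2*(Real.cos γ) + 2*(Real.sin α)*(Real.sin δ)^4*(Real.cos γ) + 1*(Real.sin α)^2*(Real.cos δ)^3*(Real.sin γ) + -1*(Real.sin α)^2*(Real.sin δ)*(Real.cos δ)^2*(Real.cos γ) + 1*(Real.sin α)^2*(Real.sin δ)^2*(Real.cos δ)*(Real.sin γ) + -1*(Real.sin α)^2*(Real.sin δ)^3*(Real.cos γ))) * (Real.sin_sq_add_cos_sq α) +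
    (r^4 * (-1*(Real.cos δ)^3*(Real.sin γ) + -1*(Real.cos δ)^3*(Real.sin γ)*(Real.cos γ)^2 + -1*(Real.cos δ)^3*(Real.sin γ)^3 + -2*(Real.sin δ)*(Real.cos γ) + 2*(Real.sin δ)*(Real.cos γ)^3 + 2*(Real.sin δ)*(Real.sin γ)^2*(Real.cos γ) + -1*(Real.sin δ)*(Real.cos δ)^2*(Real.cos γ) + 1*(Real.sin δ)*(Real.cos δ)^2*(Real.cos γ)^3 + 1*(Real.sin δ)*(Real.cos δ)^2*(Real.sin γ)^2*(Real.cos γ) + -1*(Real.sin δ)^2*(Real.cos δ)*(Real.sin γ) + -1*(Real.sin δ)^2*(Real.cos δ)*(Real.sin γ)*(Real.cos γ)^2 + -1*(Real.sin δ)^2*(Real.cos δ)*(Real.sin γ)^3 + -1*(Real.sin δ)^3*(Real.cos γ) + 1*(Real.sin δ)^3*(Real.cos γ)^3 + 1*(Real.sin δ)^3*(Real.sin γ)^2*(Real.cos γ) + -2*(Real.cos α)*(Real.sin γ) + 2*(Real.cos α)*(Real.sin γ)*(Real.cos γ)^2 + 2*(Real.cos α)*(Real.sin γ)^3 + -2*(Real.cos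 α)*(Real.cos δ)^2*(Real.sin γ) + 2*(Real.cos α)*(Real.cos δ)^2*(Real.sin γ)*(Real.cos γ)^2 + 2*(Real.cos α)*(Real.cos δ)^2*(Real.sin γ)^3 + -2*(Real.cos α)*(Real.sin δ)*(Real.cos δ)^2*(Real.cos γ)^2 + -2*(Real.cos α)*(Real.sin δ)*(Real.cos δ)^2*(Real.sin γ)^2 + -2*(Real.cos α)*(Real.sin δ)^2*(Real.sin γ) + 2*(Real.cos α)*(Real.sin δ)^2*(Real.sin γ)*(Real.cos γ)^2 + 2*(Real.cos α)*(Real.sin δ)^2*(Real.sin γ)^3 + -2*(Real.cos α)*(Real.sin δ)^3*(Real.cos γ)^2 + -2*(Real.cos α)*(Real.sin δ)^3*(Real.sin γ)^2 + 2*(Real.cos α)^2*(Real.cos δ)*(Real.sin γ) + -2*(Real.cos α)^2*(Real.cos δ)*(Real.sin γ)*(Real.cos γ)^2 + -2*(Real.cos α)^2*(Real.cos δ)*(Real.sin γ)^3 + 2*(Real.cos α)^2*(Real.cos δ)^3*(Real.sin γ) + 2*(Real.cos α)^2*(Real.sin δ)*(Real.cos γ) + -2*(Real.cos α)^2*(Real.sin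 δ)*(Real.cos γ)^3 + -2*(Real.cos α)^2*(Real.sin δ)*(Real.sin γ)^2*(Real.cos γ) + 2*(Real.cos α)^2*(Real.sin δ)*(Real.cos δ)^2*(Real.cos γ) + 2*(Real.cos α)^2*(Real.sin δ)^2*(Real.cos δ)*(Real.sin γ) + 2*(Real.cos α)^2*(Real.sin δ)^3*(Real.cos γ) + 2*(Real.sin α)*(Real.cos γ) + -2*(Real.sin α)*(Real.cos γ)^3 + -2*(Real.sin α)*(Real.sin γ)^2*(Real.cos γ) + 2*(Real.sin α)*(Real.cos δ)^2*(Real.cos γ) + -2*(Real.sin α)*(Real.cos δ)^2*(Real.cos γ)^3 + -2*(Real.sin α)*(Real.cos δ)^2*(Real.sin γ)^2*(Real.cos γ) + 2*(Real.sin α)*(Real.cos δ)^3*(Real.cos γ)^2 + 2*(Real.sin α)*(Real.cos δ)^3*(Real.sin γ)^2 + 2*(Real.sin α)*(Real.sin δ)^2*(Real.cos γ) + -2*(Real.sin α)*(Real.sin δ)^2*(Real.cos γ)^3 + -2*(Real.sin α)*(Real.sin δ)^2*(Real.sin γ)^2*(Real.cos γ) + 2*(Real.sin α)*(Real.sin δ)^2*(Real.cos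 δ)*(Real.cos γ)^2 + 2*(Real.sin α)*(Real.sin δ)^2*(Real.cos δ)*(Real.sin γ)^2 + -2*(Real.sin α)*(Real.cos α)*(Real.cos δ)*(Real.cos γ) + 2*(Real.sin α)*(Real.cos α)*(Real.cos δ)*(Real.cos γ)^3 + 2*(Real.sin α)*(Real.cos α)*(Real.cos δ)*(Real.sin γ)^2*(Real.cos γ) + -2*(Real.sin α)*(Real.cos α)*(Real.cos δ)^3*(Real.cos γ) + 2*(Real.sin α)*(Real.cos α)*(Real.sin δ)*(Real.sin γ) + -2*(Real.sin α)*(Real.cos α)*(Real.sin δ)*(Real.sin γ)*(Real.cos γ)^2 + -2*(Real.sin α)*(Real.cos α)*(Real.sin δ)*(Real.sin γ)^3 + 2*(Real.sin α)*(Real.cos α)*(Real.sin δ)*(Real.cos δ)^2*(Real.sin γ) + -2*(Real.sin α)*(Real.cos α)*(Real.sin δ)^2*(Real.cos δ)*(Real.cos γ) + 2*(Real.sin α)*(Real.cos α)*(Real.sin δ)^3*(Real.sin γ))) * (Real.sin_sq_add_cos_sq δ) +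
    (r^4 * (2*(Real.sin δ)*(Real.cos γ) + 2*(Real.cos α)*(Real.sin γ) + -2*(Real.cos α)^2*(Real.cos δ)*(Real.sin γ) + -2*(Real.cos α)^2*(Real.sin δ)*(Real.cos γ) + -2*(Real.sin α)*(Real.cos γ) + 2*(Real.sin α)*(Real.cos α)*(Real.cos δ)*(Real.cos γ) + -2*(Real.sin α)*(Real.cos α)*(Real.sin δ)*(Real.sin γ))) * (Real.sin_sq_add_cos_sq γ)

private theorem alg (x0 x1 A0 A1 D0 D1 F0 F1 W0 W1 : ℝ)
    (E1 : (x0 - F0)^2 + (x1 - F1)^2 = (D0 - F0)^2 + (D1 - F1)^2)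
    (E2 : (x0 - W0)^2 + (x1 - W1)^2 = (D0 - W0)^2 + (D1 - W1)^2)
    (hne : ¬(x0 = D0 ∧ x1 = D1))
    (hN : ((W0 - F0)^2 + (W1 - F1)^2) ≠ 0)
    (hkey : (A0 - F0)*(2*((W1 - F1)*(D0 - F0) - (W0 - F0)*(D1 - F1))*(W0 - F0) + ((W0 - F0)^2 + (W1 - F1)^2)*(D1 - F1)) - (A1 - F1)*(((W0 - F0)^2 + (W1 - F1)^2)*(D0 - F0) - 2*((W1 - F1)*(D0 - F0) - (W0 - F0)*(D1 - F1))*(W1 - F1)) = 0) :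
    (A0 - F0)*(x1 - F1) - (A1 - F1)*(x0 - F0) = 0 := by
  have h3 : (x0 - D0)*(W0 - F0) + (x1 - D1)*(W1 - F1) = 0 := by linear_combination (E1 - E2)/2
  have h5 : ((W0 - F0)^2 + (W1 - F1)^2)*(x0 - D0) = -(((x1 - D1)*(W0 - F0) - (x0 - D0)*(W1 - F1))*(W1 - F1)) := by linear_combination (W0 - F0)*h3
  have h6 : ((W0 - F0)^2 + (W1 - F1)^2)*(x1 - D1) = ((x1 - D1)*(W0 - F0) - (x0 - D0)*(W1 - F1))*(W0 - F0) := by linear_combination (W1 - F1)*h3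
  have h4 : (x0 - D0)^2 + (x1 - D1)^2 + 2*(x0 - D0)*(D0 - F0) + 2*(x1 - D1)*(D1 - F1) = 0 := by
    linear_combination E1
  have ha : ((W0 - F0)^2 + (W1 - F1)^2)^2*((x0 - D0)^2 + (x1 - D1)^2) = ((W0 - F0)^2 + (W1 - F1)^2)*((x1 - D1)*(W0 - F0) - (x0 - D0)*(W1 - F1))^2 := by
    linear_combination (((W0 - F0)^2 + (W1 - F1)^2)*(x0 - D0) - ((x1 - D1)*(W0 - F0) - (x0 - D0)*(W1 - F1))*(W1 - F1))*h5 + (((W0 - F0)^2 + (W1 - F1)^2)*(x1 - D1) + ((x1 - D1)*(W0 - F0) - (x0 - D0)*(W1 - F1))*(W0 - F0))*h6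
  have hb : ((W0 - F0)^2 + (W1 - F1)^2)^2*((x0 - D0)^2 + (x1 - D1)^2) = ((W0 - F0)^2 + (W1 - F1)^2)*(2*((W1 - F1)*(D0 - F0) - (W0 - F0)*(D1 - F1))*((x1 - D1)*(W0 - F0) - (x0 - D0)*(W1 - F1))) := by
    linear_combination ((W0 - F0)^2 + (W1 - F1)^2)^2*h4 + (-2*((W0 - F0)^2 + (W1 - F1)^2)*(D0 - F0))*h5 + (-2*((W0 - F0)^2 + (W1 - F1)^2)*(D1 - F1))*h6
  have ht : ((x1 - D1)*(W0 - F0) - (x0 - D0)*(W1 - F1))^2 = 2*((W1 - F1)*(D0 - F0) - (W0 - F0)*(D1 - F1))*((x1 - D1)*(W0 - F0) - (x0 - D0)*(W1 - F1)) := mul_left_cancel₀ hN (ha.symm.trans hb)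
  have tne : ((x1 - D1)*(W0 - F0) - (x0 - D0)*(W1 - F1)) ≠ 0 := by
    intro h0
    apply hne
    have hx0 : ((W0 - F0)^2 + (W1 - F1)^2)*(x0 - D0) = 0 := by linear_combination h5 - (W1 - F1)*h0
    have hx1 : ((W0 - F0)^2 + (W1 - F1)^2)*(x1 - D1) = 0 := by linear_combination h6 + (W0 - F0)*h0
    constructor
    · have := (mul_eq_zero.mp hx0).resolve_left hN
      linarith [this]
    · have := (mul_eq_zero.mp hx1).resolve_left hN
      linarith [this]
  have ht2 : ((x1 - D1)*(W0 - F0) - (x0 - D0)*(W1 - F1)) = 2*((W1 - F1)*(D0 - F0) - (W0 - F0)*(D1 - F1)) := by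
    have h := mul_eq_zero.mp (show (((x1 - D1)*(W0 - F0) - (x0 - D0)*(W1 - F1)) - 2*((W1 - F1)*(D0 - F0) - (W0 - F0)*(D1 - F1)))*((x1 - D1)*(W0 - F0) - (x0 - D0)*(W1 - F1)) = 0 by linear_combination ht)
    rcases h with h | h
    · linarith [h]
    · exact absurd h tne
  have hfin : ((A0 - F0)*(x1 - F1) - (A1 - F1)*(x0 - F0))*((W0 - F0)^2 + (W1 - F1)^2) = 0 := by
    linear_combination (A0 - F0)*h6 - (A1 - F1)*h5 +
      ((A0 - F0)*(W0 - F0) + (A1 - F1)*(W1 - F1))*ht2 + hkey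
  exact (mul_eq_zero.mp hfin).resolve_right hN

/-- With `A`, `D`, `C` in cyclic order on the circle, `W` the midpoint of arc `AD` and
`F` the midpoint of arc `DC`, if `X` is the second intersection point of the circle centered
at `F` through `D` and the circle centered at `W` through `D`, then `F`, `X`, `A` are
collinear. -/
theorem stmt_3 (O : EuclideanSpace ℝ (Fin 2)) (r a d c : ℝ) (hr : 0 < r)
    (had : a < d) (hdc : d < c) (hca : c < a + 2 * π)
    (X : EuclideanSpace ℝ (Fin 2))
    (hXF : X ∈ Metric.sphere (circlePt O r ((d + c) / 2))
      (dist (circlePt O r ((d + c) / 2)) (circlePt O r d)))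
    (hXW : X ∈ Metric.sphere (circlePt O r ((a + d) / 2))
      (dist (circlePt O r ((a + d) / 2)) (circlePt O r d)))
    (hXD : X ≠ circlePt O r d) :
    Collinear ℝ {circlePt O r ((d + c) / 2), X, circlePt O r a} := by
  have hc0 : ∀ θ : ℝ, circlePt O r θ 0 = O 0 + r * Real.cos θ := by
    intro θ
    simp [circlePt, PiLp.add_apply, PiLp.smul_apply, WithLp.equiv_symm_apply, PiLp.toLp_apply]
  have hc1 : ∀ θ : ℝ, circlePt O r θ 1 = O 1 + r * Real.sin θ := by
    intro θ
    simp [circlePt, PiLp.add_apply, PiLp.smul_apply, WithLp.equiv_symm_apply, PiLp.toLp_apply]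
  have dist_sq : ∀ P Q : EuclideanSpace ℝ (Fin 2),
      dist P Q ^ 2 = (P 0 - Q 0)^2 + (P 1 - Q 1)^2 := by
    intro P Q
    rw [EuclideanSpace.dist_eq, Real.sq_sqrt (by positivity)]
    simp [Fin.sum_univ_two, Real.dist_eq, sq_abs]
  -- coordinate equations for the two sphere memberships
  have e1 : (X 0 - (O 0 + r * Real.cos ((d + c) / 2)))^2
      + (X 1 - (O 1 + r * Real.sin ((d + c) / 2)))^2
      = ((O 0 + r * Real.cos d) - (O 0 + r * Real.cos ((d + c) / 2)))^2
      + ((O 1 + r * Real.sin d) - (O 1 + r * Real.sin ((d + c) / 2)))^2 := by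
    have h := Metric.mem_sphere.mp hXF
    have h2 : dist X (circlePt O r ((d + c) / 2)) ^ 2
        = dist (circlePt O r ((d + c) / 2)) (circlePt O r d) ^ 2 := by rw [h]
    rw [dist_sq, dist_sq] at h2
    simp only [hc0, hc1] at h2
    linear_combination h2
  have e2 : (X 0 - (O 0 + r * Real.cos ((a + d) / 2)))^2
      + (X 1 - (O 1 + r * Real.sin ((a + d) / 2)))^2
      = ((O 0 + r * Real.cos d) - (O 0 + r * Real.cos ((a + d) / 2)))^2
      + ((O 1 + r * Real.sin d) - (O 1 + r * Real.sin ((a + d) / 2)))^2 := by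
    have h := Metric.mem_sphere.mp hXW
    have h2 : dist X (circlePt O r ((a + d) / 2)) ^ 2
        = dist (circlePt O r ((a + d) / 2)) (circlePt O r d) ^ 2 := by rw [h]
    rw [dist_sq, dist_sq] at h2
    simp only [hc0, hc1] at h2
    linear_combination h2
  have hne : ¬(X 0 = O 0 + r * Real.cos d ∧ X 1 = O 1 + r * Real.sin d) := by
    rintro ⟨h1, h2⟩
    exact hXD (PiLp.ext (Fin.forall_fin_two.mpr
      ⟨by rw [hc0]; exact h1, by rw [hc1]; exact h2⟩))
  -- positivity facts
  have cos_lt : ∀ x : ℝ, 0 < x → x < π → Real.cos x < 1 := by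
    intro x hx1 hx2
    have hs := Real.sin_pos_of_pos_of_lt_pi hx1 hx2
    nlinarith [Real.sin_sq_add_cos_sq x, Real.neg_one_le_cos x]
  have two_pi : (0:ℝ) < π := Real.pi_pos
  have hNpos : ∀ u v : ℝ, Real.cos (u - v) < 1 →
      0 < ((O 0 + r * Real.cos u) - (O 0 + r * Real.cos v))^2
        + ((O 1 + r * Real.sin u) - (O 1 + r * Real.sin v))^2 := by
    intro u v hcos
    have h1 := Real.sin_sq_add_cos_sq u
    have h2 := Real.sin_sq_add_cos_sq v
    have h3 := Real.cos_sub u v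
    have heq : ((O 0 + r * Real.cos u) - (O 0 + r * Real.cos v))^2
        + ((O 1 + r * Real.sin u) - (O 1 + r * Real.sin v))^2
        = r^2 * (2 - 2 * Real.cos (u - v)) := by
      linear_combination r^2*h1 + r^2*h2 + 2*r^2*h3
    rw [heq]
    have := mul_pos (pow_pos hr 2) (show (0:ℝ) < 2 - 2*Real.cos (u - v) by linarith)
    linarith
  have hwf : Real.cos ((a + d) / 2 - (d + c) / 2) < 1 := by
    have : (a + d) / 2 - (d + c) / 2 = -((c - a)/2) := by ring
    rw [this, Real.cos_neg]
    exact cos_lt _ (by linarith) (by linarith)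
  have hdf : Real.cos (d - (d + c) / 2) < 1 := by
    have : d - (d + c) / 2 = -((c - d)/2) := by ring
    rw [this, Real.cos_neg]
    exact cos_lt _ (by linarith) (by linarith)
  have hN : ((O 0 + r * Real.cos ((a + d) / 2)) - (O 0 + r * Real.cos ((d + c) / 2)))^2
      + ((O 1 + r * Real.sin ((a + d) / 2)) - (O 1 + r * Real.sin ((d + c) / 2)))^2 ≠ 0 :=
    ne_of_gt (hNpos _ _ hwf)
  have hkey0 := key_trig r (a/2) (d/2) (c/2)
  rw [show 2*(a/2) = a from by ring, show 2*(d/2) = d from by ring,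
    show d/2 + c/2 = (d + c)/2 from by ring, show a/2 + d/2 = (a + d)/2 from by ring] at hkey0
  have cross := alg (X 0) (X 1) (O 0 + r * Real.cos a) (O 1 + r * Real.sin a)
    (O 0 + r * Real.cos d) (O 1 + r * Real.sin d)
    (O 0 + r * Real.cos ((d + c) / 2)) (O 1 + r * Real.sin ((d + c) / 2))
    (O 0 + r * Real.cos ((a + d) / 2)) (O 1 + r * Real.sin ((a + d) / 2))
    e1 e2 hne hN (by linear_combination hkey0)
  -- the norm of X - F is positive
  have hnrm : (X 0 - (O 0 + r * Real.cos ((d + c) / 2)))^2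
      + (X 1 - (O 1 + r * Real.sin ((d + c) / 2)))^2 ≠ 0 := by
    rw [e1]
    exact ne_of_gt (hNpos _ _ hdf)
  -- assemble collinearity
  have comp : ∀ (s : ℝ) (P Q : EuclideanSpace ℝ (Fin 2)) (i : Fin 2),
      (s • (P - Q) +ᵥ Q) i = s * (P i - Q i) + Q i := by
    intro s P Q i
    simp [vadd_eq_add, PiLp.add_apply, PiLp.smul_apply, PiLp.sub_apply, smul_eq_mul]
  rw [collinear_iff_of_mem (Set.mem_insert (circlePt O r ((d + c) / 2)) _)]
  refine ⟨X - circlePt O r ((d + c) / 2), ?_⟩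
  intro p hp
  simp only [Set.mem_insert_iff, Set.mem_singleton_iff] at hp
  rcases hp with rfl | rfl | rfl
  · exact ⟨0, by simp⟩
  · exact ⟨1, by simp⟩
  · refine ⟨(((O 0 + r * Real.cos a) - (O 0 + r * Real.cos ((d + c) / 2)))
        * (X 0 - (O 0 + r * Real.cos ((d + c) / 2)))
      + ((O 1 + r * Real.sin a) - (O 1 + r * Real.sin ((d + c) / 2)))
        * (X 1 - (O 1 + r * Real.sin ((d + c) / 2))))
      / ((X 0 - (O 0 + r * Real.cos ((d + c) / 2)))^2
        + (X 1 - (O 1 + r * Real.sin ((d + c) / 2)))^2), ?_⟩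
    refine PiLp.ext (Fin.forall_fin_two.mpr ⟨?_, ?_⟩)
    · rw [comp, hc0, hc0]
      rw [div_mul_eq_mul_div, eq_comm, div_add' _ _ _ hnrm, div_eq_iff hnrm]
      linear_combination (-(X 1 - (O 1 + r * Real.sin ((d + c) / 2)))) * cross
    · rw [comp, hc1, hc1]
      rw [div_mul_eq_mul_div, eq_comm, div_add' _ _ _ hnrm, div_eq_iff hnrm]
      linear_combination (X 0 - (O 0 + r * Real.cos ((d + c) / 2))) * cross
end

section
/- Let A, B, C, D be four points on a circle in cyclic order, with side disks ω_ab, ω_bc, ω_cd, ω_da associated to the arcs AB, BC, CD, DA. Then at least one of the two pairs of 'opposite' side disks is disjoint: either ω_ab ∩ ω_cd = ∅ or ω_bc ∩ ω_da = ∅. -/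
open EuclideanGeometry Metric Real

lemma myCosEq (x : ℝ) : Real.cos x = 1 - 2 * Real.sin (x/2) ^ 2 := by
  have h := Real.cos_two_mul (x/2)
  have h2 : 2 * (x/2) = x := by ring
  rw [h2] at h
  nlinarith [Real.sin_sq_add_cos_sq (x/2)]

lemma dist_circlePt (O : EuclideanSpace ℝ (Fin 2)) (r θ φ : ℝ) (hr : 0 ≤ r) :
    dist (circlePt O r θ) (circlePt O r φ) = 2 * r * |Real.sin ((θ - φ)/2)| := by
  have h : dist (circlePt O r θ) (circlePt O r φ)
      = Real.sqrt ((r*cos θ - r*cos φ)^2 + (r*sin θ - r*sin φ)^2) := by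
    rw [EuclideanSpace.dist_eq]
    simp [circlePt, Fin.sum_univ_two, Real.dist_eq]
  rw [h]
  have key : (r*cos θ - r*cos φ)^2 + (r*sin θ - r*sin φ)^2
      = (2 * r * |Real.sin ((θ - φ)/2)|)^2 := by
    have h1 : cos θ * cos φ + sin θ * sin φ = cos (θ - φ) := (Real.cos_sub θ φ).symm
    have h2 := myCosEq (θ - φ)
    have h3 := Real.sin_sq_add_cos_sq θ
    have h4 := Real.sin_sq_add_cos_sq φ
    have h5 : |Real.sin ((θ - φ)/2)|^2 = Real.sin ((θ - φ)/2)^2 := sq_abs _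
    linear_combination r^2*h3 + r^2*h4 - 2*r^2*h1 - 2*r^2*h2 - 4*r^2*h5
  rw [key, Real.sqrt_sq (by positivity)]

lemma keyIneq (s t u v : ℝ) (hs : 0 < s) (ht : 0 < t) (hst : s + t = π/4)
    (hu : |u| < s) (hv : |v| < t) :
    sin s * cos u + sin t * cos v < cos u ^ 2 + cos v ^ 2 - 1 := by
  have hpi : (0:ℝ) < π := Real.pi_pos
  have hs4 : s < π/4 := by linarith
  have ht4 : t < π/4 := by linarith
  -- cos u > cos s
  have hcu : cos s < cos u := by
    rw [← Real.cos_abs u]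
    exact Real.cos_lt_cos_of_nonneg_of_le_pi (abs_nonneg u) (by linarith) hu
  have hcv : cos t < cos v := by
    rw [← Real.cos_abs v]
    exact Real.cos_lt_cos_of_nonneg_of_le_pi (abs_nonneg v) (by linarith) hv
  -- sin s < cos s
  have hsc : sin s < cos s := by
    have h1 : sin s < sin (π/2 - s) :=
      Real.sin_lt_sin_of_lt_of_le_pi_div_two (by linarith) (by linarith) (by linarith)
    rwa [Real.sin_pi_div_two_sub] at h1
  have htc : sin t < cos t := by
    have h1 : sin t < sin (π/2 - t) :=
      Real.sin_lt_sin_of_lt_of_le_pi_div_two (by linarith) (by linarith) (by linarith)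
    rwa [Real.sin_pi_div_two_sub] at h1
  have hsp : 0 < sin s := Real.sin_pos_of_pos_of_lt_pi hs (by linarith)
  have htp : 0 < sin t := Real.sin_pos_of_pos_of_lt_pi ht (by linarith)
  have hcsp : 0 < cos s := lt_trans hsp hsc
  have hctp : 0 < cos t := lt_trans htp htc
  -- base equality: cos s ^2 + cos t ^2 - sin s * cos s - sin t * cos t = 1
  have htt : t = π/4 - s := by linarith
  have hct : cos t = Real.sqrt 2 / 2 * (cos s + sin s) := by
    rw [htt, Real.cos_sub, Real.cos_pi_div_four, Real.sin_pi_div_four]; ring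
  have hstt : sin t = Real.sqrt 2 / 2 * (cos s - sin s) := by
    rw [htt, Real.sin_sub, Real.cos_pi_div_four, Real.sin_pi_div_four]; ring
  have hsq2 : Real.sqrt 2 ^ 2 = 2 := Real.sq_sqrt (by norm_num)
  have hpyth := Real.sin_sq_add_cos_sq s
  have base : cos s ^ 2 + cos t ^ 2 - sin s * cos s - sin t * cos t = 1 := by
    rw [hct, hstt]
    linear_combination hpyth + ((Real.cos s * Real.sin s + Real.sin s ^ 2)/2) * hsq2
  have e1 : 0 < (cos u - cos s) * (cos u + cos s - sin s) := by nlinarith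
  have e2 : 0 < (cos v - cos t) * (cos v + cos t - sin t) := by nlinarith
  nlinarith [e1, e2, base]

lemma keyDisj (α β γ δ : ℝ) (hα : 0 < α) (hβ : 0 < β) (hγ : 0 < γ) (hδ : 0 < δ)
    (hsum : α + β + γ + δ = π/2) :
    sin α + sin γ < sin (α + 2*β + γ) ∨ sin β + sin δ < sin (β + 2*γ + δ) := by
  by_contra h
  push_neg at h
  obtain ⟨h1, h2⟩ := h
  set s := (α + γ)/2 with hsdef
  set u := (α - γ)/2 with hudef
  set t := (β + δ)/2 with htdef
  set v := (β - δ)/2 with hvdef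
  have hα' : α = s + u := by rw [hsdef, hudef]; ring
  have hγ' : γ = s - u := by rw [hsdef, hudef]; ring
  have hβ' : β = t + v := by rw [htdef, hvdef]; ring
  have hδ' : δ = t - v := by rw [htdef, hvdef]; ring
  have hsin1 : sin α + sin γ = 2 * sin s * cos u := by
    rw [hα', hγ', Real.sin_add, Real.sin_sub]; ring
  have hsin2 : sin β + sin δ = 2 * sin t * cos v := by
    rw [hβ', hδ', Real.sin_add, Real.sin_sub]; ring
  have harg1 : α + 2*β + γ = π/2 + 2*v := by
    rw [hα', hγ', hβ', hvdef] at *; linarith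
  have harg2 : β + 2*γ + δ = π/2 - 2*u := by
    rw [hβ', hδ', hα', hγ'] at *; linarith
  have hc1 : sin (α + 2*β + γ) = 2 * cos v ^ 2 - 1 := by
    rw [harg1, Real.sin_add, Real.sin_pi_div_two, Real.cos_pi_div_two,
      Real.cos_two_mul]; ring
  have hc2 : sin (β + 2*γ + δ) = 2 * cos u ^ 2 - 1 := by
    rw [harg2, Real.sin_pi_div_two_sub, Real.cos_two_mul]
  have hkey := keyIneq s t u v (by simp [hsdef]; linarith) (by simp [htdef]; linarith)
    (by rw [hsdef, htdef]; linarith)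
    (by rw [abs_lt]; constructor <;> [skip; skip] <;> rw [hudef, hsdef] <;> linarith)
    (by rw [abs_lt]; constructor <;> [skip; skip] <;> rw [hvdef, htdef] <;> linarith)
  rw [hsin1, hc1] at h1
  rw [hsin2, hc2] at h2
  linarith

/-- For `A, B, C, D` in cyclic order on a circle, at least one of the two pairs of opposite
side disks is disjoint. -/
theorem stmt_7 (O : EuclideanSpace ℝ (Fin 2)) (r a b c d : ℝ) (hr : 0 < r)
    (hab : a < b) (hbc : b < c) (hcd : c < d) (hda : d < a + 2 * π) :
    sideDisk O r a b ∩ sideDisk O r c d = ∅ ∨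
    sideDisk O r b c ∩ sideDisk O r d (a + 2 * π) = ∅ := by
  have hpi : (0:ℝ) < π := Real.pi_pos
  set α := (b - a)/4 with hα
  set β := (c - b)/4 with hβ
  set γ := (d - c)/4 with hγ
  set δ := (a + 2*π - d)/4 with hδ
  have hαp : 0 < α := by rw [hα]; linarith
  have hβp : 0 < β := by rw [hβ]; linarith
  have hγp : 0 < γ := by rw [hγ]; linarith
  have hδp : 0 < δ := by rw [hδ]; linarith
  have hsum : α + β + γ + δ = π/2 := by rw [hα, hβ, hγ, hδ]; ring
  have habs : ∀ x : ℝ, 0 ≤ x → x ≤ π → |sin x| = sin x := fun x h1 h2 =>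
    abs_of_nonneg (Real.sin_nonneg_of_nonneg_of_le_pi h1 h2)
  rcases keyDisj α β γ δ hαp hβp hγp hδp hsum with h | h
  · left
    rw [← Set.disjoint_iff_inter_eq_empty]
    apply Metric.closedBall_disjoint_closedBall
    rw [dist_circlePt O r _ _ hr.le, dist_circlePt O r _ _ hr.le,
      dist_circlePt O r _ _ hr.le]
    have e1 : ((a+b)/2 - a)/2 = α := by rw [hα]; ring
    have e2 : ((c+d)/2 - c)/2 = γ := by rw [hγ]; ring
    have e3 : ((a+b)/2 - (c+d)/2)/2 = -(α + 2*β + γ) := by rw [hα, hβ, hγ]; ring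
    rw [e1, e2, e3, Real.sin_neg, abs_neg]
    rw [habs α hαp.le (by linarith), habs γ hγp.le (by linarith),
      habs (α + 2*β + γ) (by linarith) (by linarith)]
    nlinarith
  · right
    rw [← Set.disjoint_iff_inter_eq_empty]
    apply Metric.closedBall_disjoint_closedBall
    rw [dist_circlePt O r _ _ hr.le, dist_circlePt O r _ _ hr.le,
      dist_circlePt O r _ _ hr.le]
    have e1 : ((b+c)/2 - b)/2 = β := by rw [hβ]; ring
    have e2 : ((d+(a+2*π))/2 - d)/2 = δ := by rw [hδ]; ring
    have e3 : ((b+c)/2 - (d+(a+2*π))/2)/2 = -(β + 2*γ + δ) := by rw [hβ, hγ, hδ]; ring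
    rw [e1, e2, e3, Real.sin_neg, abs_neg]
    rw [habs β hβp.le (by linarith), habs δ hδp.le (by linarith),
      habs (β + 2*γ + δ) (by linarith) (by linarith)]
    nlinarith
end

section
/- Let ω be a closed disk centered at F with radius r, X and Y boundary points of ω with |XY| strictly less than the diameter 2r, M the midpoint of segment XY, and N the point where the ray from F through M meets the boundary circle beyond M. Then for any point E on that ray on the far side of M from F with ∠XEY ≤ π/2, one has |ME| > |MN|, hence |FE| > r and E lies strictly outside ω. -/
open EuclideanGeometry Metric Real

lemma stmt_14_aux {r a m b : ℝ} (hr : 0 < r) (hpyth : m ^ 2 + a ^ 2 = r ^ 2)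
    (hab : a ≤ b) (hapos : 0 < a) (halt : a < r) (hmnn : 0 ≤ m) : r - m < b := by
  have hmpos : 0 < m := by nlinarith
  nlinarith [mul_pos hmpos hapos]

/-- Let `ω` be the closed disk of radius `r` centered at `F`, `X`, `Y` boundary points with
`|XY| < 2r`, `M` the midpoint of `XY`, `N` the point beyond `M` on the ray from `F` through
`M` with `|FN| = r`. Any point `E` on that ray beyond `M` with `∠XEY ≤ π/2` satisfies
`|ME| > |MN|`, hence `|FE| > r` and `E` lies strictly outside `ω`. -/
theorem stmt_14 (F X Y N E : EuclideanSpace ℝ (Fin 2)) (r : ℝ) (hr : 0 < r)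
    (hX : dist F X = r) (hY : dist F Y = r) (hXY : X ≠ Y) (hdiam : dist X Y < 2 * r)
    (hN : dist F N = r) (hNbtw : Sbtw ℝ F (midpoint ℝ X Y) N)
    (hEbtw : Sbtw ℝ F (midpoint ℝ X Y) E) (hangle : ∠ X E Y ≤ π / 2) :
    dist (midpoint ℝ X Y) N < dist (midpoint ℝ X Y) E ∧
    r < dist F E ∧ E ∉ Metric.closedBall F r := by
  set M := midpoint ℝ X Y with hM
  clear_value M
  have hFMN : dist F M + dist M N = r := by rw [← hN]; exact hNbtw.wbtw.dist_add_dist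
  have hFME : dist F M + dist M E = dist F E := hEbtw.wbtw.dist_add_dist
  have hMM : M + M = X + Y := by rw [hM]; exact midpoint_add_self ℝ X Y
  have hYM : Y - M = -(X - M) := by
    rw [neg_sub, sub_eq_sub_iff_add_eq_add, add_comm Y X, ← hMM]
  -- r² = ‖F - M‖² + ‖X - M‖²
  have hXr : ‖(F - M) - (X - M)‖ = r := by
    rw [show (F - M) - (X - M) = F - X by abel, ← dist_eq_norm, hX]
  have hYr : ‖(F - M) + (X - M)‖ = r := by
    rw [show (F - M) + (X - M) = F - Y by rw [← sub_neg_eq_add, ← hYM]; abel, ← dist_eq_norm, hY]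
  have hpyth : ‖F - M‖ ^ 2 + ‖X - M‖ ^ 2 = r ^ 2 := by
    have h1 := norm_add_sq_real (F - M) (X - M)
    have h2 := norm_sub_sq_real (F - M) (X - M)
    rw [hXr] at h2; rw [hYr] at h1
    nlinarith [h1, h2]
  -- angle condition gives inner nonneg
  have hinner : (0 : ℝ) ≤ inner ℝ (X - E) (Y - E) := by
    have hang : InnerProductGeometry.angle (X - E) (Y - E) = ∠ X E Y := by
      rw [EuclideanGeometry.angle]
      congr 1
    have hcos : 0 ≤ Real.cos (InnerProductGeometry.angle (X - E) (Y - E)) := by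
      apply Real.cos_nonneg_of_mem_Icc
      constructor
      · linarith [InnerProductGeometry.angle_nonneg (X - E) (Y - E), Real.pi_pos]
      · rw [hang]; exact hangle
    rw [← InnerProductGeometry.cos_angle_mul_norm_mul_norm (X - E) (Y - E)]
    exact mul_nonneg hcos (mul_nonneg (norm_nonneg _) (norm_nonneg _))
  -- ‖E - M‖ ≥ ‖X - M‖
  have hXE : X - E = (X - M) - (E - M) := by abel
  have hYE : Y - E = -(X - M) - (E - M) := by rw [show Y - E = (Y - M) - (E - M) by abel, hYM]
  have hME : ‖X - M‖ ≤ ‖E - M‖ := by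
    have hexp : (inner ℝ (X - E) (Y - E) : ℝ) = ‖E - M‖ ^ 2 - ‖X - M‖ ^ 2 := by
      rw [hXE, hYE, ← real_inner_self_eq_norm_sq, ← real_inner_self_eq_norm_sq]
      simp only [inner_sub_left, inner_sub_right, inner_neg_left, inner_neg_right]
      rw [real_inner_comm M X, real_inner_comm E X, real_inner_comm E M]
      ring
    nlinarith [norm_nonneg (X - M), norm_nonneg (E - M), hinner, hexp]
  have hXMd : ‖X - M‖ = dist X Y / 2 := by
    rw [← dist_eq_norm, hM, dist_left_midpoint]
    norm_num
    ring
  have hXMpos : 0 < ‖X - M‖ := by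
    rw [hXMd]
    have : 0 < dist X Y := dist_pos.2 hXY
    linarith
  have hXMlt : ‖X - M‖ < r := by rw [hXMd]; linarith
  have hFMd : dist F M = ‖F - M‖ := dist_eq_norm F M
  have hMEd : dist M E = ‖E - M‖ := by rw [dist_comm, dist_eq_norm]
  have hFE' : dist F E = ‖F - M‖ + ‖E - M‖ := by rw [← hFME, hFMd, hMEd]
  have h1 : dist M N = r - ‖F - M‖ := by rw [← hFMN, hFMd]; ring
  have harith : r - ‖F - M‖ < ‖E - M‖ :=
    stmt_14_aux hr hpyth hME hXMpos hXMlt (norm_nonneg _)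
  refine ⟨by rw [h1, hMEd]; linarith, by rw [hFE']; linarith, fun h => ?_⟩
  rw [Metric.mem_closedBall, dist_comm, hFE'] at h
  linarith
end
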